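/- Let 1/2 < b ≤ 1, s > 1/2, and a ≤ 2 − 2b. Then sup over k of Σ_{k₁,k₂} ⟨k⟩^{2a−2+2b} ⟨k₁⟩^{-2s} ⟨k₂⟩^{-2s+2−2b} / (⟨k−k₁⟩^{2−2b} ⟨k₁−k₂⟩^{2−2b}) is finite. -/

import Mathlib

open scoped BigOperators

/-- Japanese bracket `⟨x⟩ = (1+x²)^{1/2}`. -/
noncomputable def jb (x : ℝ) : ℝ := Real.sqrt (1 + x ^ 2)

lemma one_le_jb (x : ℝ) : 1 ≤ jb x := by
  rw [jb]
  nlinarith [Real.sq_sqrt (by positivity : (0:ℝ) ≤ 1 + x ^ 2),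
    Real.sqrt_nonneg (1 + x ^ 2), sq_nonneg x]

lemma jb_pos (x : ℝ) : 0 < jb x := lt_of_lt_of_le one_pos (one_le_jb x)

lemma jb_nonneg (x : ℝ) : 0 ≤ jb x := (jb_pos x).le

lemma one_le_sqrt_two : (1:ℝ) ≤ Real.sqrt 2 := by
  nlinarith [Real.sq_sqrt (by norm_num : (0:ℝ) ≤ 2), Real.sqrt_nonneg 2]

lemma sqrt_two_le_two : Real.sqrt 2 ≤ (3:ℝ) / 2 := by
  nlinarith [Real.sq_sqrt (by norm_num : (0:ℝ) ≤ 2), Real.sqrt_nonneg 2]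

lemma jb_mono {x y : ℝ} (h : |x| ≤ |y|) : jb x ≤ jb y := by
  apply Real.sqrt_le_sqrt
  nlinarith [sq_abs x, sq_abs y, abs_nonneg x]

lemma jb_le_two_mul {x y : ℝ} (h : |x| ≤ 2 * |y|) : jb x ≤ 2 * jb y := by
  have h2 : (2:ℝ) * jb y = Real.sqrt (4 * (1 + y ^ 2)) := by
    rw [jb, show (4:ℝ) * (1 + y ^ 2) = 2 ^ 2 * (1 + y ^ 2) by ring,
      Real.sqrt_mul (by positivity), Real.sqrt_sq (by norm_num)]
  rw [jb, h2]
  apply Real.sqrt_le_sqrt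
  nlinarith [sq_abs x, sq_abs y, abs_nonneg x, abs_nonneg y]

lemma jb_neg (x : ℝ) : jb (-x) = jb x := by rw [jb, jb]; ring_nf

lemma abs_add_one_le (x : ℝ) : |x| + 1 ≤ Real.sqrt 2 * jb x := by
  have h1 : |x| + 1 = Real.sqrt ((|x| + 1) ^ 2) := (Real.sqrt_sq (by positivity)).symm
  have h2 : Real.sqrt 2 * jb x = Real.sqrt (2 * (1 + x ^ 2)) := by
    rw [jb, Real.sqrt_mul (by norm_num)]
  rw [h1, h2]
  apply Real.sqrt_le_sqrt
  nlinarith [sq_abs x, sq_nonneg (|x| - 1)]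

lemma jb_rpow_pos (x t : ℝ) : 0 < jb x ^ t := Real.rpow_pos_of_pos (jb_pos x) t

lemma jb_rpow_nonneg (x t : ℝ) : 0 ≤ jb x ^ t := (jb_rpow_pos x t).le

lemma rpow_mul_neg_rpow {x : ℝ} (hx : 0 < x) (t : ℝ) : x ^ t * x ^ (-t) = 1 := by
  rw [← Real.rpow_add hx]; simp

/-- if `0 < y ≤ 2x` then `x^(-t) ≤ 2^t y^(-t)` for `t ≥ 0`. -/
lemma neg_rpow_le_of_le {x y t : ℝ} (hy : 0 < y) (ht : 0 ≤ t) (h : y ≤ 2 * x) :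
    x ^ (-t) ≤ (2:ℝ) ^ t * y ^ (-t) := by
  have hx : 0 < y * 2⁻¹ := by positivity
  have h1 : x ^ (-t) ≤ (y * 2⁻¹) ^ (-t) :=
    Real.rpow_le_rpow_of_nonpos hx (by linarith) (neg_nonpos.mpr ht)
  have h2 : (y * 2⁻¹ : ℝ) ^ (-t) = (2:ℝ) ^ t * y ^ (-t) := by
    rw [Real.mul_rpow hy.le (by norm_num), Real.inv_rpow (by norm_num : (0:ℝ) ≤ 2),
      Real.rpow_neg (by norm_num : (0:ℝ) ≤ 2), inv_inv]
    ring
  rw [h2] at h1; exact h1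

set_option maxHeartbeats 1000000 in
lemma summable_jb_rpow {t : ℝ} (ht : 1 < t) : Summable (fun n : ℤ => jb (n : ℝ) ^ (-t)) := by
  have hnat : Summable (fun n : ℕ => jb (n : ℝ) ^ (-t)) := by
    have h1 : Summable (fun n : ℕ => (((n : ℝ) + 1) ^ t)⁻¹) := by
      have := (summable_nat_add_iff (f := fun n : ℕ => (((n : ℝ)) ^ t)⁻¹) 1).mpr
        (Real.summable_nat_rpow_inv.mpr ht)
      simpa using this
    have h2 : Summable (fun n : ℕ => Real.sqrt 2 ^ t * (((n : ℝ) + 1) ^ t)⁻¹) := h1.mul_left _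
    refine Summable.of_nonneg_of_le (fun n => (jb_rpow_pos _ _).le) (fun n => ?_) h2
    have hb : ((n : ℝ) + 1) / Real.sqrt 2 ≤ jb (n : ℝ) := by
      rw [div_le_iff₀ (by positivity)]
      have h3 := abs_add_one_le (n : ℝ)
      rw [abs_of_nonneg (Nat.cast_nonneg n)] at h3
      linarith [mul_comm (Real.sqrt 2) (jb (n : ℝ))]
    have h4 : jb (n : ℝ) ^ (-t) ≤ (((n : ℝ) + 1) / Real.sqrt 2) ^ (-t) :=
      Real.rpow_le_rpow_of_nonpos (by positivity) hb (neg_nonpos.mpr (by linarith))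
    refine h4.trans (le_of_eq ?_)
    rw [Real.div_rpow (by positivity) (Real.sqrt_nonneg 2),
      Real.rpow_neg (by positivity : (0:ℝ) ≤ (n : ℝ) + 1),
      Real.rpow_neg (Real.sqrt_nonneg 2), div_eq_mul_inv, inv_inv]
    ring
  refine Summable.of_nat_of_neg ?_ ?_
  · simp only [Int.cast_natCast]; exact hnat
  · simp only [Int.cast_neg, Int.cast_natCast, jb_neg]; exact hnat

lemma sum_jb_shift {t : ℝ} (ht : 1 < t) (m : ℤ) (G : Finset ℤ) :
    ∑ n ∈ G, jb ((m : ℝ) - n) ^ (-t) ≤ ∑' n : ℤ, jb (n : ℝ) ^ (-t) := by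
  have himg : ∑ n ∈ G, jb ((m : ℝ) - n) ^ (-t) =
      ∑ j ∈ G.image (fun n => m - n), jb (j : ℝ) ^ (-t) := by
    rw [Finset.sum_image (by intro a _ b _ h; simp only at h; omega)]
    exact Finset.sum_congr rfl fun n _ => by norm_cast
  rw [himg]
  exact Summable.sum_le_tsum _ (fun n _ => (jb_rpow_pos _ _).le) (summable_jb_rpow ht)

lemma inner_bound {α γ : ℝ} (hα : 0 ≤ α) (hγ : 0 ≤ γ) (h1 : 1 < α + γ) (m : ℤ) (G : Finset ℤ) :
    ∑ n ∈ G, jb (n : ℝ) ^ (-α) * jb ((m : ℝ) - n) ^ (-γ) ≤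
      2 * ∑' n : ℤ, jb (n : ℝ) ^ (-(α + γ)) := by
  have hpt : ∀ n : ℤ, jb (n : ℝ) ^ (-α) * jb ((m : ℝ) - n) ^ (-γ) ≤
      jb (n : ℝ) ^ (-(α + γ)) + jb ((m : ℝ) - n) ^ (-(α + γ)) := by
    intro n
    rcases le_total (jb (n : ℝ)) (jb ((m : ℝ) - n)) with h | h
    · have h2 : jb ((m : ℝ) - n) ^ (-γ) ≤ jb (n : ℝ) ^ (-γ) :=
        Real.rpow_le_rpow_of_nonpos (jb_pos _) h (neg_nonpos.mpr hγ)
      have h3 : jb (n : ℝ) ^ (-α) * jb ((m : ℝ) - n) ^ (-γ) ≤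
          jb (n : ℝ) ^ (-α) * jb (n : ℝ) ^ (-γ) :=
        mul_le_mul_of_nonneg_left h2 (jb_rpow_nonneg _ _)
      have h4 : jb (n : ℝ) ^ (-α) * jb (n : ℝ) ^ (-γ) = jb (n : ℝ) ^ (-(α + γ)) := by
        rw [← Real.rpow_add (jb_pos _)]; congr 1; ring
      linarith [jb_rpow_pos ((m : ℝ) - n) (-(α + γ))]
    · have h2 : jb (n : ℝ) ^ (-α) ≤ jb ((m : ℝ) - n) ^ (-α) :=
        Real.rpow_le_rpow_of_nonpos (jb_pos _) h (neg_nonpos.mpr hα)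
      have h3 : jb (n : ℝ) ^ (-α) * jb ((m : ℝ) - n) ^ (-γ) ≤
          jb ((m : ℝ) - n) ^ (-α) * jb ((m : ℝ) - n) ^ (-γ) :=
        mul_le_mul_of_nonneg_right h2 (jb_rpow_nonneg _ _)
      have h4 : jb ((m : ℝ) - n) ^ (-α) * jb ((m : ℝ) - n) ^ (-γ) =
          jb ((m : ℝ) - n) ^ (-(α + γ)) := by
        rw [← Real.rpow_add (jb_pos _)]; congr 1; ring
      linarith [jb_rpow_pos (n : ℝ) (-(α + γ))]
  calc ∑ n ∈ G, jb (n : ℝ) ^ (-α) * jb ((m : ℝ) - n) ^ (-γ)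
      ≤ ∑ n ∈ G, (jb (n : ℝ) ^ (-(α + γ)) + jb ((m : ℝ) - n) ^ (-(α + γ))) :=
        Finset.sum_le_sum fun n _ => hpt n
    _ = (∑ n ∈ G, jb (n : ℝ) ^ (-(α + γ))) + ∑ n ∈ G, jb ((m : ℝ) - n) ^ (-(α + γ)) :=
        Finset.sum_add_distrib
    _ ≤ (∑' n : ℤ, jb (n : ℝ) ^ (-(α + γ))) + ∑' n : ℤ, jb (n : ℝ) ^ (-(α + γ)) := by
        gcongr
        · exact Summable.sum_le_tsum G (fun n _ => (jb_rpow_pos _ _).le) (summable_jb_rpow h1)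
        · exact sum_jb_shift h1 m G
    _ = 2 * ∑' n : ℤ, jb (n : ℝ) ^ (-(α + γ)) := by ring

lemma sum_range_rpow {c : ℝ} (hc0 : 0 ≤ c) (hc1 : c < 1) (N : ℕ) :
    ∑ m ∈ Finset.range N, ((m : ℝ) + 1) ^ (-c) ≤ (N : ℝ) ^ (1 - c) / (1 - c) := by
  have h1c : (0:ℝ) < 1 - c := by linarith
  induction N with
  | zero => simp [Real.zero_rpow (by linarith : (1:ℝ) - c ≠ 0)]
  | succ N ih =>
    rw [Finset.sum_range_succ]
    have hN1 : (0:ℝ) < (N : ℝ) + 1 := by positivity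
    have key : ((N : ℝ)) ^ (1 - c) + (1 - c) * ((N : ℝ) + 1) ^ (-c) ≤ ((N : ℝ) + 1) ^ (1 - c) := by
      have amgm : (N : ℝ) ^ (1 - c) * ((N : ℝ) + 1) ^ c ≤ (1 - c) * (N : ℝ) + c * ((N : ℝ) + 1) :=
        Real.geom_mean_le_arith_mean2_weighted (by linarith) hc0 (Nat.cast_nonneg N)
          (by positivity) (by ring)
      have e1 : ((N : ℝ) + 1) ^ (1 - c) = ((N : ℝ) + 1) * ((N : ℝ) + 1) ^ (-c) := by
        rw [show (1:ℝ) - c = 1 + -c by ring, Real.rpow_add hN1, Real.rpow_one]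
      have e2 : (N : ℝ) ^ (1 - c) =
          (N : ℝ) ^ (1 - c) * ((N : ℝ) + 1) ^ c * ((N : ℝ) + 1) ^ (-c) := by
        rw [mul_assoc, ← Real.rpow_add hN1]; simp
      have hpow : (0:ℝ) ≤ ((N : ℝ) + 1) ^ (-c) := Real.rpow_nonneg hN1.le _
      rw [e1]; nth_rewrite 1 [e2]
      nlinarith [amgm, hpow]
    have h2 : (N : ℝ) ^ (1 - c) / (1 - c) + ((N : ℝ) + 1) ^ (-c) ≤
        ((N : ℝ) + 1) ^ (1 - c) / (1 - c) := by
      rw [div_add' _ _ _ h1c.ne', div_le_div_iff₀ h1c h1c]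
      nlinarith [key, h1c]
    push_cast
    linarith [ih]

lemma sum_union_le_real {ι : Type*} [DecidableEq ι] (A B : Finset ι) (f : ι → ℝ)
    (hf : ∀ i, 0 ≤ f i) : ∑ i ∈ A ∪ B, f i ≤ ∑ i ∈ A, f i + ∑ i ∈ B, f i := by
  rw [show A ∪ B = A ∪ (B \ A) from (Finset.union_sdiff_self_eq_union).symm,
    Finset.sum_union Finset.disjoint_sdiff]
  exact add_le_add_right
    (Finset.sum_le_sum_of_subset_of_nonneg (Finset.sdiff_subset) fun i _ _ => hf i) _

lemma sum_Icc_jb {c : ℝ} (hc0 : 0 ≤ c) (hc1 : c < 1) (M : ℕ) :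
    ∑ j ∈ Finset.Icc (-(M : ℤ)) (M : ℤ), jb (j : ℝ) ^ (-c) ≤
      4 / (1 - c) * ((M : ℝ) + 1) ^ (1 - c) := by
  classical
  have hterm : ∀ j : ℤ, jb (j : ℝ) ^ (-c) ≤ 2 * (((j.natAbs : ℝ)) + 1) ^ (-c) := by
    intro j
    have hb : (((j.natAbs : ℝ)) + 1) / Real.sqrt 2 ≤ jb (j : ℝ) := by
      rw [div_le_iff₀ (by positivity)]
      have h3 := abs_add_one_le (j : ℝ)
      have hna : ((j.natAbs : ℝ)) = |(j : ℝ)| := by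
        rw [Nat.cast_natAbs]; push_cast; ring
      rw [hna]
      linarith [mul_comm (Real.sqrt 2) (jb (j : ℝ))]
    have h4 : jb (j : ℝ) ^ (-c) ≤ ((((j.natAbs : ℝ)) + 1) / Real.sqrt 2) ^ (-c) :=
      Real.rpow_le_rpow_of_nonpos (by positivity) hb (neg_nonpos.mpr hc0)
    refine h4.trans ?_
    have h5 : ((((j.natAbs : ℝ)) + 1) / Real.sqrt 2) ^ (-c) =
        Real.sqrt 2 ^ c * (((j.natAbs : ℝ)) + 1) ^ (-c) := by
      rw [Real.div_rpow (by positivity) (Real.sqrt_nonneg 2),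
        Real.rpow_neg (by positivity : (0:ℝ) ≤ ((j.natAbs : ℝ)) + 1),
        Real.rpow_neg (Real.sqrt_nonneg 2), div_eq_mul_inv, inv_inv]
      ring
    rw [h5]
    have h6 : Real.sqrt 2 ^ c ≤ 2 := by
      calc Real.sqrt 2 ^ c ≤ Real.sqrt 2 ^ (1:ℝ) :=
            Real.rpow_le_rpow_of_exponent_le one_le_sqrt_two (by linarith)
        _ = Real.sqrt 2 := Real.rpow_one _
        _ ≤ 2 := by linarith [sqrt_two_le_two]
    exact mul_le_mul_of_nonneg_right h6 (Real.rpow_nonneg (by positivity) _)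
  have hsub : Finset.Icc (-(M : ℤ)) (M : ℤ) ⊆
      (Finset.range (M + 1)).image (fun m : ℕ => (m : ℤ)) ∪
        (Finset.range (M + 1)).image (fun m : ℕ => -(m : ℤ)) := by
    intro j hj
    simp only [Finset.mem_Icc] at hj
    simp only [Finset.mem_union, Finset.mem_image, Finset.mem_range]
    rcases le_total 0 j with h | h
    · exact Or.inl ⟨j.natAbs, by omega, by omega⟩
    · exact Or.inr ⟨j.natAbs, by omega, by omega⟩
  have hrange := sum_range_rpow hc0 hc1 (M + 1)
  calc ∑ j ∈ Finset.Icc (-(M : ℤ)) (M : ℤ), jb (j : ℝ) ^ (-c)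
      ≤ ∑ j ∈ Finset.Icc (-(M : ℤ)) (M : ℤ), 2 * (((j.natAbs : ℝ)) + 1) ^ (-c) :=
        Finset.sum_le_sum fun j _ => hterm j
    _ ≤ ∑ j ∈ (Finset.range (M + 1)).image (fun m : ℕ => (m : ℤ)) ∪
          (Finset.range (M + 1)).image (fun m : ℕ => -(m : ℤ)),
          2 * (((j.natAbs : ℝ)) + 1) ^ (-c) := by
        apply Finset.sum_le_sum_of_subset_of_nonneg hsub
        intro j _ _; positivity
    _ ≤ (∑ j ∈ (Finset.range (M + 1)).image (fun m : ℕ => (m : ℤ)),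
          2 * (((j.natAbs : ℝ)) + 1) ^ (-c)) +
        ∑ j ∈ (Finset.range (M + 1)).image (fun m : ℕ => -(m : ℤ)),
          2 * (((j.natAbs : ℝ)) + 1) ^ (-c) := by
        apply sum_union_le_real
        intro j; positivity
    _ = (∑ m ∈ Finset.range (M + 1), 2 * (((m : ℝ)) + 1) ^ (-c)) +
        ∑ m ∈ Finset.range (M + 1), 2 * (((m : ℝ)) + 1) ^ (-c) := by
        congr 1
        · rw [Finset.sum_image (by intro a _ b _ h; simp only at h; exact_mod_cast h)]
          apply Finset.sum_congr rfl; intro m _; norm_num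
        · rw [Finset.sum_image (by intro a _ b _ h; simp only at h; omega)]
          apply Finset.sum_congr rfl; intro m _
          simp [Int.natAbs_neg]
    _ = 4 * ∑ m ∈ Finset.range (M + 1), (((m : ℝ)) + 1) ^ (-c) := by
        rw [← Finset.mul_sum]; ring
    _ ≤ 4 * (((M + 1 : ℕ) : ℝ) ^ (1 - c) / (1 - c)) := by
        apply mul_le_mul_of_nonneg_left hrange (by norm_num)
    _ = 4 / (1 - c) * ((M : ℝ) + 1) ^ (1 - c) := by push_cast; ring

lemma outer_bound {s b : ℝ} (hb1 : 1 / 2 < b) (hb2 : b ≤ 1) (hs : 1 / 2 < s) :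
    ∃ C : ℝ, 0 ≤ C ∧ ∀ (k : ℤ) (G : Finset ℤ),
      ∑ n ∈ G, jb (k : ℝ) ^ (2 - 2 * b) * jb (n : ℝ) ^ (-(2 * s)) *
          jb ((k : ℝ) - n) ^ (-(2 - 2 * b)) ≤ C := by
  classical
  set c : ℝ := 2 - 2 * b with hc
  have hc0 : 0 ≤ c := by simp only [hc]; linarith
  have hc1 : c < 1 := by simp only [hc]; linarith
  have h1c : (0:ℝ) < 1 - c := by linarith
  have hts : (1:ℝ) < 2 * s := by linarith
  set S1 : ℝ := ∑' n : ℤ, jb (n : ℝ) ^ (-(2 * s)) with hS1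
  have hS1n : 0 ≤ S1 := tsum_nonneg fun n => (jb_rpow_pos _ _).le
  refine ⟨2 * S1 + 2 * S1 + 20 * (2:ℝ) ^ (2 * s) / (1 - c),
    by have h20 : (0:ℝ) < (2:ℝ) ^ (2 * s) := by positivity
       have := div_nonneg (by positivity : (0:ℝ) ≤ 20 * (2:ℝ) ^ (2 * s)) h1c.le
       linarith, ?_⟩
  intro k G
  set f : ℤ → ℝ := fun n => jb (k : ℝ) ^ c * jb (n : ℝ) ^ (-(2 * s)) *
    jb ((k : ℝ) - n) ^ (-c) with hf
  -- three regions
  set Gs := G.filter (fun n => 2 * |n| < |k|) with hGs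
  set Gr := G.filter (fun n => ¬ 2 * |n| < |k|) with hGr
  set Gb := Gr.filter (fun n => 2 * |k| < |n|) with hGb
  set Gm := Gr.filter (fun n => ¬ 2 * |k| < |n|) with hGm
  have hsplit1 : ∑ n ∈ G, f n = ∑ n ∈ Gs, f n + ∑ n ∈ Gr, f n :=
    (Finset.sum_filter_add_sum_filter_not G _ f).symm
  have hsplit2 : ∑ n ∈ Gr, f n = ∑ n ∈ Gb, f n + ∑ n ∈ Gm, f n :=
    (Finset.sum_filter_add_sum_filter_not Gr _ f).symm
  -- generic bound when |k| ≤ 2|k - n|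
  have hgen : ∀ n : ℤ, jb (k : ℝ) ≤ 2 * jb ((k : ℝ) - n) →
      f n ≤ 2 * jb (n : ℝ) ^ (-(2 * s)) := by
    intro n hK2A
    have h1 : jb (k : ℝ) ^ c ≤ (2:ℝ) ^ c * jb ((k : ℝ) - n) ^ c := by
      calc jb (k : ℝ) ^ c ≤ (2 * jb ((k : ℝ) - n)) ^ c :=
            Real.rpow_le_rpow (jb_nonneg _) hK2A hc0
        _ = (2:ℝ) ^ c * jb ((k : ℝ) - n) ^ c :=
            Real.mul_rpow (by norm_num) (jb_nonneg _)
    have h2 : jb (k : ℝ) ^ c * jb ((k : ℝ) - n) ^ (-c) ≤ 2 := by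
      calc jb (k : ℝ) ^ c * jb ((k : ℝ) - n) ^ (-c)
          ≤ ((2:ℝ) ^ c * jb ((k : ℝ) - n) ^ c) * jb ((k : ℝ) - n) ^ (-c) :=
            mul_le_mul_of_nonneg_right h1 (jb_rpow_nonneg _ _)
        _ = (2:ℝ) ^ c * (jb ((k : ℝ) - n) ^ c * jb ((k : ℝ) - n) ^ (-c)) := by ring
        _ = (2:ℝ) ^ c := by rw [rpow_mul_neg_rpow (jb_pos _)]; ring
        _ ≤ (2:ℝ) ^ (1:ℝ) := Real.rpow_le_rpow_of_exponent_le one_le_two hc1.le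
        _ = 2 := Real.rpow_one 2
    calc f n = (jb (k : ℝ) ^ c * jb ((k : ℝ) - n) ^ (-c)) * jb (n : ℝ) ^ (-(2 * s)) := by
          rw [hf]; ring
      _ ≤ 2 * jb (n : ℝ) ^ (-(2 * s)) :=
          mul_le_mul_of_nonneg_right h2 (jb_rpow_nonneg _ _)
  have hcastabs : ∀ m : ℤ, ((|m| : ℤ) : ℝ) = |(m : ℝ)| := fun m => by
    rw [Int.cast_abs]
  -- small region bound
  have hsmall : ∑ n ∈ Gs, f n ≤ 2 * S1 := by
    have hpt : ∀ n ∈ Gs, f n ≤ 2 * jb (n : ℝ) ^ (-(2 * s)) := by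
      intro n hn
      have hcond : 2 * |n| < |k| := by
        have := (Finset.mem_filter.mp hn).2
        simpa using this
      apply hgen
      apply jb_le_two_mul
      have hZ : |k| ≤ 2 * |k - n| := by
        have t1 := abs_sub_abs_le_abs_sub k n
        linarith
      calc |(k : ℝ)| = ((|k| : ℤ) : ℝ) := (hcastabs k).symm
        _ ≤ ((2 * |k - n| : ℤ) : ℝ) := by exact_mod_cast hZ
        _ = 2 * |(k : ℝ) - n| := by rw [Int.cast_mul, Int.cast_ofNat, hcastabs]; push_cast; ring
    calc ∑ n ∈ Gs, f n ≤ ∑ n ∈ Gs, 2 * jb (n : ℝ) ^ (-(2 * s)) := Finset.sum_le_sum hpt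
      _ = 2 * ∑ n ∈ Gs, jb (n : ℝ) ^ (-(2 * s)) := by rw [Finset.mul_sum]
      _ ≤ 2 * S1 := by
          apply mul_le_mul_of_nonneg_left _ (by norm_num)
          exact Summable.sum_le_tsum Gs (fun n _ => (jb_rpow_pos _ _).le) (summable_jb_rpow hts)
  -- big region bound
  have hbig : ∑ n ∈ Gb, f n ≤ 2 * S1 := by
    have hpt : ∀ n ∈ Gb, f n ≤ 2 * jb (n : ℝ) ^ (-(2 * s)) := by
      intro n hn
      have hcond : 2 * |k| < |n| := by
        have := (Finset.mem_filter.mp hn).2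
        simpa using this
      have hZ : |n| ≤ 2 * |k - n| := by
        have t1 := abs_sub_abs_le_abs_sub n k
        have t2 : |n - k| = |k - n| := abs_sub_comm n k
        linarith
      have habs : |(n : ℝ)| ≤ 2 * |(k : ℝ) - n| := by
        calc |(n : ℝ)| = ((|n| : ℤ) : ℝ) := (hcastabs n).symm
          _ ≤ ((2 * |k - n| : ℤ) : ℝ) := by exact_mod_cast hZ
          _ = 2 * |(k : ℝ) - n| := by rw [Int.cast_mul, Int.cast_ofNat, hcastabs]; push_cast; ring
      have hkn : |(k : ℝ)| ≤ |(n : ℝ)| := by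
        have hZ2 : |k| ≤ |n| := by have := abs_nonneg k; linarith
        calc |(k : ℝ)| = ((|k| : ℤ) : ℝ) := (hcastabs k).symm
          _ ≤ ((|n| : ℤ) : ℝ) := by exact_mod_cast hZ2
          _ = |(n : ℝ)| := hcastabs n
      apply hgen
      calc jb (k : ℝ) ≤ jb (n : ℝ) := jb_mono hkn
        _ ≤ 2 * jb ((k : ℝ) - n) := jb_le_two_mul habs
    calc ∑ n ∈ Gb, f n ≤ ∑ n ∈ Gb, 2 * jb (n : ℝ) ^ (-(2 * s)) := Finset.sum_le_sum hpt
      _ = 2 * ∑ n ∈ Gb, jb (n : ℝ) ^ (-(2 * s)) := by rw [Finset.mul_sum]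
      _ ≤ 2 * S1 := by
          apply mul_le_mul_of_nonneg_left _ (by norm_num)
          exact Summable.sum_le_tsum Gb (fun n _ => (jb_rpow_pos _ _).le) (summable_jb_rpow hts)
  -- middle region bound
  have hmid : ∑ n ∈ Gm, f n ≤ 20 * (2:ℝ) ^ (2 * s) / (1 - c) := by
    have hone : (1:ℝ) ≤ jb (k : ℝ) := one_le_jb _
    have hmemm : ∀ n ∈ Gm, |k| ≤ 2 * |n| ∧ |n| ≤ 2 * |k| := by
      intro n hn
      have hc1' : ¬ 2 * |k| < |n| := by
        have := (Finset.mem_filter.mp hn).2; simpa using this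
      have hc2' : ¬ 2 * |n| < |k| := by
        have := (Finset.mem_filter.mp (Finset.mem_filter.mp hn).1).2; simpa using this
      exact ⟨not_lt.mp hc2', not_lt.mp hc1'⟩
    have hpt : ∀ n ∈ Gm, f n ≤
        ((2:ℝ) ^ (2 * s) * jb (k : ℝ) ^ (c - 2 * s)) * jb ((k : ℝ) - n) ^ (-c) := by
      intro n hn
      obtain ⟨hk2n, _⟩ := hmemm n hn
      have habs : |(k : ℝ)| ≤ 2 * |(n : ℝ)| := by
        calc |(k : ℝ)| = ((|k| : ℤ) : ℝ) := (hcastabs k).symm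
          _ ≤ ((2 * |n| : ℤ) : ℝ) := by exact_mod_cast hk2n
          _ = 2 * |(n : ℝ)| := by rw [Int.cast_mul, Int.cast_ofNat, hcastabs]
      have hK2N : jb (k : ℝ) ≤ 2 * jb (n : ℝ) := jb_le_two_mul habs
      have h1 : jb (n : ℝ) ^ (-(2 * s)) ≤ (2:ℝ) ^ (2 * s) * jb (k : ℝ) ^ (-(2 * s)) :=
        neg_rpow_le_of_le (jb_pos _) (by linarith) hK2N
      have h2 : f n ≤ jb (k : ℝ) ^ c * ((2:ℝ) ^ (2 * s) * jb (k : ℝ) ^ (-(2 * s))) *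
          jb ((k : ℝ) - n) ^ (-c) := by
        rw [hf]
        apply mul_le_mul_of_nonneg_right _ (jb_rpow_nonneg _ _)
        exact mul_le_mul_of_nonneg_left h1 (jb_rpow_nonneg _ _)
      refine h2.trans (le_of_eq ?_)
      rw [show jb (k : ℝ) ^ c * ((2:ℝ) ^ (2 * s) * jb (k : ℝ) ^ (-(2 * s))) =
          (2:ℝ) ^ (2 * s) * (jb (k : ℝ) ^ c * jb (k : ℝ) ^ (-(2 * s))) by ring,
        ← Real.rpow_add (jb_pos _)]
      ring_nf
    have hsum2 : ∑ n ∈ Gm, jb ((k : ℝ) - n) ^ (-c) ≤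
        4 / (1 - c) * ((3 * (k.natAbs : ℝ)) + 1) ^ (1 - c) := by
      set M : ℕ := 3 * k.natAbs with hM
      have hMk : (M : ℤ) = 3 * |k| := by
        rw [hM]; push_cast; rw [Int.abs_eq_natAbs]
      have himg : ∑ n ∈ Gm, jb ((k : ℝ) - n) ^ (-c) =
          ∑ j ∈ Gm.image (fun n => k - n), jb (j : ℝ) ^ (-c) := by
        rw [Finset.sum_image (by intro a _ b _ h; simp only at h; omega)]
        apply Finset.sum_congr rfl; intro n _
        push_cast
        ring_nf
      rw [himg]
      have hsub2 : Gm.image (fun n => k - n) ⊆ Finset.Icc (-(M : ℤ)) (M : ℤ) := by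
        intro j hj
        simp only [Finset.mem_image] at hj
        obtain ⟨n, hn, rfl⟩ := hj
        obtain ⟨_, hn2k⟩ := hmemm n hn
        have htri : |k - n| ≤ |k| + |n| := by
          have h := abs_add_le k (-n); rwa [abs_neg, ← sub_eq_add_neg] at h
        simp only [Finset.mem_Icc]
        rw [hMk]
        constructor
        · linarith [neg_abs_le (k - n)]
        · linarith [le_abs_self (k - n)]
      calc ∑ j ∈ Gm.image (fun n => k - n), jb (j : ℝ) ^ (-c)
          ≤ ∑ j ∈ Finset.Icc (-(M : ℤ)) (M : ℤ), jb (j : ℝ) ^ (-c) :=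
            Finset.sum_le_sum_of_subset_of_nonneg hsub2 fun j _ _ => (jb_rpow_pos _ _).le
        _ ≤ 4 / (1 - c) * ((M : ℝ) + 1) ^ (1 - c) := sum_Icc_jb hc0 hc1 M
        _ = 4 / (1 - c) * ((3 * (k.natAbs : ℝ)) + 1) ^ (1 - c) := by
            congr 2
            rw [hM]; push_cast; ring
    have hMK : (3 * (k.natAbs : ℝ)) + 1 ≤ 3 * Real.sqrt 2 * jb (k : ℝ) := by
      have h3 := abs_add_one_le (k : ℝ)
      have hna : ((k.natAbs : ℝ)) = |(k : ℝ)| := by rw [Nat.cast_natAbs]; push_cast; ring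
      rw [hna]
      have hjb1 : 1 ≤ Real.sqrt 2 * jb (k : ℝ) := by
        nlinarith [abs_nonneg (k : ℝ)]
      nlinarith [abs_nonneg (k : ℝ)]
    have hpow : ((3 * (k.natAbs : ℝ)) + 1) ^ (1 - c) ≤
        (3 * Real.sqrt 2) * jb (k : ℝ) ^ (1 - c) := by
      calc ((3 * (k.natAbs : ℝ)) + 1) ^ (1 - c)
          ≤ (3 * Real.sqrt 2 * jb (k : ℝ)) ^ (1 - c) :=
            Real.rpow_le_rpow (by positivity) hMK h1c.le
        _ = (3 * Real.sqrt 2) ^ (1 - c) * jb (k : ℝ) ^ (1 - c) :=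
            Real.mul_rpow (by positivity) (jb_nonneg _)
        _ ≤ (3 * Real.sqrt 2) * jb (k : ℝ) ^ (1 - c) := by
            apply mul_le_mul_of_nonneg_right _ (jb_rpow_nonneg _ _)
            have hb1 : (1:ℝ) ≤ 3 * Real.sqrt 2 := by linarith [one_le_sqrt_two]
            calc (3 * Real.sqrt 2) ^ (1 - c) ≤ (3 * Real.sqrt 2) ^ (1:ℝ) :=
                  Real.rpow_le_rpow_of_exponent_le hb1 (by linarith)
              _ = 3 * Real.sqrt 2 := Real.rpow_one _
    have hconst : (0:ℝ) ≤ (2:ℝ) ^ (2 * s) * jb (k : ℝ) ^ (c - 2 * s) :=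
      mul_nonneg (by positivity) (jb_rpow_nonneg _ _)
    calc ∑ n ∈ Gm, f n
        ≤ ∑ n ∈ Gm, ((2:ℝ) ^ (2 * s) * jb (k : ℝ) ^ (c - 2 * s)) * jb ((k : ℝ) - n) ^ (-c) :=
          Finset.sum_le_sum hpt
      _ = ((2:ℝ) ^ (2 * s) * jb (k : ℝ) ^ (c - 2 * s)) * ∑ n ∈ Gm, jb ((k : ℝ) - n) ^ (-c) := by
          rw [Finset.mul_sum]
      _ ≤ ((2:ℝ) ^ (2 * s) * jb (k : ℝ) ^ (c - 2 * s)) *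
          (4 / (1 - c) * ((3 * (k.natAbs : ℝ)) + 1) ^ (1 - c)) :=
          mul_le_mul_of_nonneg_left hsum2 hconst
      _ ≤ ((2:ℝ) ^ (2 * s) * jb (k : ℝ) ^ (c - 2 * s)) *
          (4 / (1 - c) * ((3 * Real.sqrt 2) * jb (k : ℝ) ^ (1 - c))) := by
          apply mul_le_mul_of_nonneg_left _ hconst
          exact mul_le_mul_of_nonneg_left hpow (div_nonneg (by norm_num) h1c.le)
      _ = (2:ℝ) ^ (2 * s) * (12 * Real.sqrt 2) / (1 - c) *
          (jb (k : ℝ) ^ (c - 2 * s) * jb (k : ℝ) ^ (1 - c)) := by ring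
      _ = (2:ℝ) ^ (2 * s) * (12 * Real.sqrt 2) / (1 - c) * jb (k : ℝ) ^ (1 - 2 * s) := by
          rw [← Real.rpow_add (jb_pos _)]; congr 1; ring
      _ ≤ (2:ℝ) ^ (2 * s) * (12 * Real.sqrt 2) / (1 - c) * 1 := by
          apply mul_le_mul_of_nonneg_left _
            (div_nonneg (mul_nonneg (by positivity) (by positivity)) h1c.le)
          calc jb (k : ℝ) ^ (1 - 2 * s) ≤ jb (k : ℝ) ^ (0:ℝ) :=
                Real.rpow_le_rpow_of_exponent_le hone (by linarith)
            _ = 1 := Real.rpow_zero _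
      _ ≤ 20 * (2:ℝ) ^ (2 * s) / (1 - c) := by
          rw [mul_one, div_le_div_iff₀ h1c h1c]
          have h2s : (0:ℝ) < (2:ℝ) ^ (2 * s) := by positivity
          nlinarith [sqrt_two_le_two, Real.sqrt_nonneg 2,
            mul_nonneg h2s.le h1c.le]
  calc ∑ n ∈ G, f n = ∑ n ∈ Gs, f n + (∑ n ∈ Gb, f n + ∑ n ∈ Gm, f n) := by
        rw [hsplit1, hsplit2]
    _ ≤ 2 * S1 + (2 * S1 + 20 * (2:ℝ) ^ (2 * s) / (1 - c)) := by
        gcongr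
    _ = 2 * S1 + 2 * S1 + 20 * (2:ℝ) ^ (2 * s) / (1 - c) := by ring

theorem stmt8 (s b a : ℝ) (hb1 : 1 / 2 < b) (hb2 : b ≤ 1) (hs : 1 / 2 < s)
    (ha : a ≤ 2 - 2 * b) :
    ∃ C : ℝ, ∀ (k : ℤ) (F : Finset (ℤ × ℤ)),
      ∑ p ∈ F,
        jb (k : ℝ) ^ (2 * a - 2 + 2 * b) * jb (p.1 : ℝ) ^ (-(2 * s)) *
            jb (p.2 : ℝ) ^ (-(2 * s) + 2 - 2 * b) /
          (jb ((k : ℝ) - p.1) ^ (2 - 2 * b) * jb ((p.1 : ℝ) - p.2) ^ (2 - 2 * b))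
        ≤ C := by
  classical
  obtain ⟨C3, hC3n, hC3⟩ := outer_bound hb1 hb2 hs
  have hc0 : (0:ℝ) ≤ 2 - 2 * b := by linarith
  have hα0 : (0:ℝ) ≤ 2 * s - 2 + 2 * b := by linarith
  have hαc : (2 * s - 2 + 2 * b) + (2 - 2 * b) = 2 * s := by ring
  have hts : (1:ℝ) < 2 * s := by linarith
  set S1 : ℝ := ∑' n : ℤ, jb (n : ℝ) ^ (-(2 * s)) with hS1
  have hS1n : 0 ≤ S1 := tsum_nonneg fun n => (jb_rpow_pos _ _).le
  refine ⟨C3 * (2 * S1), ?_⟩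
  intro k F
  set P : ℤ → ℝ := fun n => jb (k : ℝ) ^ (2 - 2 * b) * jb (n : ℝ) ^ (-(2 * s)) *
    jb ((k : ℝ) - n) ^ (-(2 - 2 * b)) with hP
  set Q : ℤ → ℤ → ℝ := fun m n => jb (n : ℝ) ^ (-(2 * s - 2 + 2 * b)) *
    jb ((m : ℝ) - n) ^ (-(2 - 2 * b)) with hQ
  have hPnn : ∀ n, 0 ≤ P n := fun n =>
    mul_nonneg (mul_nonneg (jb_rpow_nonneg _ _) (jb_rpow_nonneg _ _)) (jb_rpow_nonneg _ _)
  have hQnn : ∀ m n, 0 ≤ Q m n := fun m n =>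
    mul_nonneg (jb_rpow_nonneg _ _) (jb_rpow_nonneg _ _)
  -- pointwise bound
  have hpt : ∀ p : ℤ × ℤ,
      jb (k : ℝ) ^ (2 * a - 2 + 2 * b) * jb (p.1 : ℝ) ^ (-(2 * s)) *
          jb (p.2 : ℝ) ^ (-(2 * s) + 2 - 2 * b) /
        (jb ((k : ℝ) - p.1) ^ (2 - 2 * b) * jb ((p.1 : ℝ) - p.2) ^ (2 - 2 * b))
        ≤ P p.1 * Q p.1 p.2 := by
    intro p
    have he : 2 * a - 2 + 2 * b ≤ 2 - 2 * b := by linarith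
    have hK : jb (k : ℝ) ^ (2 * a - 2 + 2 * b) ≤ jb (k : ℝ) ^ (2 - 2 * b) :=
      Real.rpow_le_rpow_of_exponent_le (one_le_jb _) he
    have hexp2 : jb (p.2 : ℝ) ^ (-(2 * s) + 2 - 2 * b) =
        jb (p.2 : ℝ) ^ (-(2 * s - 2 + 2 * b)) := by congr 1; ring
    have hrwA : jb ((k : ℝ) - p.1) ^ (-(2 - 2 * b)) = (jb ((k : ℝ) - p.1) ^ (2 - 2 * b))⁻¹ :=
      Real.rpow_neg (jb_nonneg _) _
    have hrwB : jb ((p.1 : ℝ) - p.2) ^ (-(2 - 2 * b)) = (jb ((p.1 : ℝ) - p.2) ^ (2 - 2 * b))⁻¹ :=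
      Real.rpow_neg (jb_nonneg _) _
    have key : jb (k : ℝ) ^ (2 * a - 2 + 2 * b) * jb (p.1 : ℝ) ^ (-(2 * s)) *
          jb (p.2 : ℝ) ^ (-(2 * s) + 2 - 2 * b) /
        (jb ((k : ℝ) - p.1) ^ (2 - 2 * b) * jb ((p.1 : ℝ) - p.2) ^ (2 - 2 * b)) =
        (jb (k : ℝ) ^ (2 * a - 2 + 2 * b) * jb (p.1 : ℝ) ^ (-(2 * s)) *
          jb ((k : ℝ) - p.1) ^ (-(2 - 2 * b))) *
        (jb (p.2 : ℝ) ^ (-(2 * s - 2 + 2 * b)) * jb ((p.1 : ℝ) - p.2) ^ (-(2 - 2 * b))) := by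
      rw [hexp2, hrwA, hrwB, div_eq_mul_inv, mul_inv]
      ring
    rw [key]
    have hstep : jb (k : ℝ) ^ (2 * a - 2 + 2 * b) * jb (p.1 : ℝ) ^ (-(2 * s)) *
        jb ((k : ℝ) - p.1) ^ (-(2 - 2 * b)) ≤ P p.1 := by
      apply mul_le_mul_of_nonneg_right _ (jb_rpow_nonneg _ _)
      exact mul_le_mul_of_nonneg_right hK (jb_rpow_nonneg _ _)
    exact mul_le_mul_of_nonneg_right hstep (hQnn p.1 p.2)
  -- sum manipulation
  set F1 := F.image Prod.fst with hF1
  set F2 := F.image Prod.snd with hF2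
  have hsub : F ⊆ F1 ×ˢ F2 := by
    intro p hp
    simp only [hF1, hF2, Finset.mem_product, Finset.mem_image]
    exact ⟨⟨p, hp, rfl⟩, ⟨p, hp, rfl⟩⟩
  calc ∑ p ∈ F,
        jb (k : ℝ) ^ (2 * a - 2 + 2 * b) * jb (p.1 : ℝ) ^ (-(2 * s)) *
            jb (p.2 : ℝ) ^ (-(2 * s) + 2 - 2 * b) /
          (jb ((k : ℝ) - p.1) ^ (2 - 2 * b) * jb ((p.1 : ℝ) - p.2) ^ (2 - 2 * b))
      ≤ ∑ p ∈ F, P p.1 * Q p.1 p.2 := Finset.sum_le_sum fun p _ => hpt p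
    _ ≤ ∑ p ∈ F1 ×ˢ F2, P p.1 * Q p.1 p.2 := by
        apply Finset.sum_le_sum_of_subset_of_nonneg hsub
        intro p _ _
        exact mul_nonneg (hPnn _) (hQnn _ _)
    _ = ∑ m ∈ F1, ∑ n ∈ F2, P m * Q m n := by rw [Finset.sum_product]
    _ = ∑ m ∈ F1, P m * ∑ n ∈ F2, Q m n := by
        apply Finset.sum_congr rfl; intro m _; rw [Finset.mul_sum]
    _ ≤ ∑ m ∈ F1, P m * (2 * S1) := by
        apply Finset.sum_le_sum
        intro m _
        apply mul_le_mul_of_nonneg_left _ (hPnn m)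
        have h := inner_bound hα0 hc0 (by rw [hαc]; exact hts) m F2
        rw [hαc] at h
        exact h
    _ = (∑ m ∈ F1, P m) * (2 * S1) := by rw [← Finset.sum_mul]
    _ ≤ C3 * (2 * S1) := by
        apply mul_le_mul_of_nonneg_right _ (by linarith)
        exact hC3 k F1
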